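/- Let φ : G → G be a homomorphism of (G, ∘). Then for every g ∈ G and every integer p > 0, the ∗-iterate g^{∗p} equals the ∘-product, over all k with 0 ≤ k ≤ p − 1 such that the binomial coefficient C(p−1, k) is odd, of the iterates φ^{(k)}(g); equivalently, g^{∗p} = ⨀_{k=0}^{p−1} γ_{k,p} · φ^{(k)}(g), where γ_{k,p} = C(p−1, k) mod 2 are the entries of the binary (mod-2) Pascal triangle, φ^{(0)}(g) = g, φ^{(k)} denotes the k-fold iterate of φ, and the coefficient action is 1·g = g, 0·g = 1. -/

import Mathlib

/-- The `∗`-iterates: `starIter φ g (p-1)` is `g^{∗p}`, i.e. `g^{∗1} = g` and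
`g^{∗(p+1)} = g^{∗p} ∗ g^{∗p} = g^{∗p} ∘ φ(g^{∗p})`. -/
def starIter {G : Type*} [CommGroup G] (φ : G → G) (g : G) : ℕ → G
  | 0 => g
  | n + 1 => starIter φ g n * φ (starIter φ g n)

/-- Let `(G, ∘)` be a finite group with `g ∘ g = 1` (hence abelian),
`φ : G → G` a homomorphism for `∘`, and `g₁ ∗ g₂ = g₁ ∘ φ(g₂)`.  Then for every `g`
and every `p > 0`, `g^{∗p} = ⨀_{k=0}^{p-1} γ_{k,p} · φ^{(k)}(g)` where
`γ_{k,p} = C(p-1, k) mod 2` (the mod-2 Pascal triangle), `φ^{(k)}` is the `k`-fold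
iterate of `φ`, and the coefficient action is `1·g = g`, `0·g = 1`. -/
theorem stmt5 {G : Type*} [CommGroup G] [Fintype G] (h2 : ∀ g : G, g * g = 1)
    (φ : G → G) (hφ : ∀ a b : G, φ (a * b) = φ a * φ b) :
    ∀ (g : G) (p : ℕ), 0 < p →
      starIter φ g (p - 1) =
        ∏ k ∈ Finset.range p,
          if Nat.choose (p - 1) k % 2 = 1 then φ^[k] g else 1 := by
  have h1 : φ 1 = 1 := by
    have h := hφ 1 1
    rw [one_mul] at h
    exact (left_eq_mul.mp h)
  let F : G →* G := { toFun := φ, map_one' := h1, map_mul' := hφ }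
  intro g p hp
  obtain ⟨n, rfl⟩ := Nat.exists_eq_succ_of_ne_zero hp.ne'
  simp only [Nat.succ_sub_one]
  have key : ∀ m, starIter φ g m = ∏ k ∈ Finset.range (m + 1), φ^[k] g ^ m.choose k := by
    intro m
    induction m with
    | zero => simp [starIter]
    | succ m ih =>
      have hφprod : φ (∏ k ∈ Finset.range (m + 1), φ^[k] g ^ m.choose k)
          = ∏ k ∈ Finset.range (m + 1), φ^[k + 1] g ^ m.choose k := by
        rw [show φ = ⇑F from rfl, map_prod]
        refine Finset.prod_congr rfl fun k _ => ?_
        rw [map_pow]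
        congr 1
        exact (Function.iterate_succ_apply' φ k g).symm
      have hA : ∏ k ∈ Finset.range (m + 1), φ^[k] g ^ m.choose k
          = (∏ k ∈ Finset.range (m + 1), φ^[k + 1] g ^ m.choose (k + 1)) * g := by
        rw [Finset.prod_range_succ' (fun k => φ^[k] g ^ m.choose k) m,
          Finset.prod_range_succ (fun k => φ^[k + 1] g ^ m.choose (k + 1)) m]
        simp
      have hR : ∏ k ∈ Finset.range (m + 2), φ^[k] g ^ (m + 1).choose k
          = (∏ k ∈ Finset.range (m + 1), φ^[k + 1] g ^ (m + 1).choose (k + 1)) * g := by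
        rw [Finset.prod_range_succ' (fun k => φ^[k] g ^ (m + 1).choose k) (m + 1)]
        simp
      rw [starIter, ih, hφprod, hA, hR, mul_right_comm]
      congr 1
      rw [← Finset.prod_mul_distrib]
      refine Finset.prod_congr rfl fun k _ => ?_
      rw [← pow_add]
      congr 1
      rw [Nat.choose_succ_succ]
      rw [Nat.succ_eq_add_one]
      omega
  rw [key n]
  refine Finset.prod_congr rfl fun k _ => ?_
  have hx : φ^[k] g ^ 2 = 1 := by rw [sq]; exact h2 _
  conv_lhs => rw [← Nat.div_add_mod (n.choose k) 2]
  rw [pow_add, pow_mul, hx, one_pow, one_mul]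
  rcases Nat.mod_two_eq_zero_or_one (n.choose k) with h | h <;> simp [h]
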